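/- Every nonempty compact metric space X admits an isometry-invariant Borel probability measure: there exists a Borel probability measure μ on X such that for every bijective isometry g : X → X, the pushforward of μ under g equals μ. -/

import Mathlib

open MeasureTheory
open Topology

set_option linter.unusedSectionVars false
set_option maxHeartbeats 1000000

section
variable {X : Type*} [MetricSpace X] [CompactSpace X]

/-- The map sending an isometry equivalence to the pair of continuous maps
(itself, its inverse). -/
def isoPhi (f : X ≃ᵢ X) : C(X, X) × C(X, X) :=
  (⟨f, f.continuous⟩, ⟨f.symm, f.symm.continuous⟩)

instance : TopologicalSpace (X ≃ᵢ X) :=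
  TopologicalSpace.induced isoPhi inferInstance

lemma isoPhi_injective : Function.Injective (isoPhi (X := X)) := by
  intro f g h
  have h1 : (isoPhi f).1 = (isoPhi g).1 := by rw [h]
  ext x
  exact DFunLike.congr_fun h1 x

lemma isoPhi_embedding : IsEmbedding (isoPhi (X := X)) :=
  ⟨⟨rfl⟩, isoPhi_injective⟩

lemma isoPhi_continuous : Continuous (isoPhi (X := X)) :=
  continuous_induced_dom

instance : ContinuousMul (X ≃ᵢ X) := by
  constructor
  rw [isoPhi_embedding.isInducing.continuous_iff]
  have h1 : (fun p : (X ≃ᵢ X) × (X ≃ᵢ X) => isoPhi (p.1 * p.2)) =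
      fun p => ((isoPhi p.1).1.comp (isoPhi p.2).1, (isoPhi p.2).2.comp (isoPhi p.1).2) := by
    funext p
    refine Prod.ext ?_ ?_ <;> ext x <;> rfl
  rw [Function.comp_def, h1]
  have hc : Continuous (fun q : C(X, X) × C(X, X) => q.1.comp q.2) := by
    have := ContinuousMap.continuous_comp' (X := X) (Y := X) (Z := X)
    exact this.comp (continuous_snd.prodMk continuous_fst)
  have c1 : Continuous (fun p : (X ≃ᵢ X) × (X ≃ᵢ X) => (isoPhi p.1).1) :=
    (continuous_fst.comp isoPhi_continuous).comp continuous_fst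
  have c2 : Continuous (fun p : (X ≃ᵢ X) × (X ≃ᵢ X) => (isoPhi p.2).1) :=
    (continuous_fst.comp isoPhi_continuous).comp continuous_snd
  have c3 : Continuous (fun p : (X ≃ᵢ X) × (X ≃ᵢ X) => (isoPhi p.1).2) :=
    (continuous_snd.comp isoPhi_continuous).comp continuous_fst
  have c4 : Continuous (fun p : (X ≃ᵢ X) × (X ≃ᵢ X) => (isoPhi p.2).2) :=
    (continuous_snd.comp isoPhi_continuous).comp continuous_snd
  exact (hc.comp (c1.prodMk c2)).prodMk (hc.comp (c4.prodMk c3))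

instance : ContinuousInv (X ≃ᵢ X) := by
  constructor
  rw [isoPhi_embedding.isInducing.continuous_iff]
  have h1 : (isoPhi ∘ fun f : X ≃ᵢ X => f⁻¹) = Prod.swap ∘ isoPhi := by
    funext f
    refine Prod.ext ?_ ?_ <;> ext x <;> rfl
  rw [h1]
  exact continuous_swap.comp isoPhi_continuous

instance : IsTopologicalGroup (X ≃ᵢ X) := ⟨⟩

instance : T2Space (X ≃ᵢ X) := isoPhi_embedding.t2Space

lemma isCompact_isometrySet : IsCompact {f : C(X, X) | Isometry f} := by
  apply ArzelaAscoli.isCompact_of_equicontinuous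
  · -- compact in pointwise topology
    have hcl : IsClosed (ContinuousMap.toFun '' {f : C(X, X) | Isometry f}) := by
      have : ContinuousMap.toFun '' {f : C(X, X) | Isometry f}
          = {f : X → X | ∀ x y, dist (f x) (f y) = dist x y} := by
        ext f
        constructor
        · rintro ⟨g, hg, rfl⟩ x y
          exact hg.dist_eq x y
        · intro hf
          have hiso : Isometry f := Isometry.of_dist_eq hf
          exact ⟨⟨f, hiso.continuous⟩, hiso, rfl⟩
      rw [this]
      have : {f : X → X | ∀ x y, dist (f x) (f y) = dist x y}
          = ⋂ x, ⋂ y, {f : X → X | dist (f x) (f y) = dist x y} := by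
        ext f; simp [Set.mem_iInter]
      rw [this]
      refine isClosed_iInter fun x => isClosed_iInter fun y => ?_
      exact isClosed_eq (by continuity) continuous_const
    exact hcl.isCompact
  · -- equicontinuous
    intro x
    rw [Metric.equicontinuousAt_iff_right]
    intro ε hε
    filter_upwards [Metric.ball_mem_nhds x hε] with y hy i
    rw [i.2.dist_eq]
    exact Metric.mem_ball'.mp hy

lemma range_isoPhi : Set.range (isoPhi (X := X)) =
    {p : C(X, X) × C(X, X) | (∀ x, p.2 (p.1 x) = x) ∧ (∀ x, p.1 (p.2 x) = x) ∧ Isometry p.1} := by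
  ext p
  constructor
  · rintro ⟨f, rfl⟩
    exact ⟨fun x => f.symm_apply_apply x, fun x => f.apply_symm_apply x, f.isometry⟩
  · rintro ⟨h1, h2, h3⟩
    exact ⟨⟨⟨p.1, p.2, h1, h2⟩, h3⟩, rfl⟩

lemma isClosed_range_isoPhi : IsClosed (Set.range (isoPhi (X := X))) := by
  rw [range_isoPhi]
  have heval : Continuous fun q : C(X, X) × X => q.1 q.2 := continuous_eval
  have h1 : IsClosed {p : C(X, X) × C(X, X) | ∀ x, p.2 (p.1 x) = x} := by
    have : {p : C(X, X) × C(X, X) | ∀ x, p.2 (p.1 x) = x}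
        = ⋂ x, {p : C(X, X) × C(X, X) | p.2 (p.1 x) = x} := by ext p; simp
    rw [this]
    refine isClosed_iInter fun x => isClosed_eq ?_ continuous_const
    exact heval.comp ((continuous_snd.prodMk ((heval.comp
      (continuous_fst.prodMk continuous_const)))))
  have h2 : IsClosed {p : C(X, X) × C(X, X) | ∀ x, p.1 (p.2 x) = x} := by
    have : {p : C(X, X) × C(X, X) | ∀ x, p.1 (p.2 x) = x}
        = ⋂ x, {p : C(X, X) × C(X, X) | p.1 (p.2 x) = x} := by ext p; simp
    rw [this]
    refine isClosed_iInter fun x => isClosed_eq ?_ continuous_const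
    exact heval.comp ((continuous_fst.prodMk ((heval.comp
      (continuous_snd.prodMk continuous_const)))))
  have h3 : IsClosed {p : C(X, X) × C(X, X) | Isometry p.1} := by
    have : {p : C(X, X) × C(X, X) | Isometry p.1}
        = ⋂ x, ⋂ y, {p : C(X, X) × C(X, X) | dist (p.1 x) (p.1 y) = dist x y} := by
      ext p
      simp only [Set.mem_iInter, Set.mem_setOf_eq]
      exact ⟨fun h x y => h.dist_eq x y, fun h => Isometry.of_dist_eq h⟩
    rw [this]
    refine isClosed_iInter fun x => isClosed_iInter fun y => isClosed_eq ?_ continuous_const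
    exact continuous_dist.comp
      ((heval.comp (continuous_fst.prodMk continuous_const)).prodMk
       (heval.comp (continuous_fst.prodMk continuous_const)))
  exact h1.inter (h2.inter h3)

instance : CompactSpace (X ≃ᵢ X) := by
  rw [← isCompact_univ_iff, isoPhi_embedding.isCompact_iff, Set.image_univ]
  refine IsCompact.of_isClosed_subset
    (isCompact_isometrySet.prod isCompact_isometrySet) isClosed_range_isoPhi ?_
  rw [range_isoPhi]
  rintro p ⟨h1, h2, h3⟩
  refine ⟨h3, Isometry.of_dist_eq fun x y => ?_⟩
  calc dist (p.2 x) (p.2 y) = dist (p.1 (p.2 x)) (p.1 (p.2 y)) := (h3.dist_eq _ _).symm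
  _ = dist x y := by rw [h2, h2]

lemma continuous_isoEval (x : X) : Continuous fun f : X ≃ᵢ X => f x := by
  have : (fun f : X ≃ᵢ X => f x) = (fun q : C(X, X) => q x) ∘ (fun f => (isoPhi f).1) := rfl
  rw [this]
  exact (continuous_eval_const x).comp (continuous_fst.comp isoPhi_continuous)

end

/-- Every nonempty compact metric space admits an isometry-invariant Borel probability
measure: a probability measure `μ` whose pushforward under every bijective isometry of the
space equals `μ`. -/
theorem exists_isometry_invariant_measure
    {X : Type*} [MetricSpace X] [CompactSpace X] [Nonempty X]
    [MeasurableSpace X] [BorelSpace X] :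
    ∃ μ : Measure X, IsProbabilityMeasure μ ∧
      ∀ g : X → X, Function.Bijective g → Isometry g → μ.map g = μ := by
  letI : MeasurableSpace (X ≃ᵢ X) := borel _
  haveI : BorelSpace (X ≃ᵢ X) := ⟨rfl⟩
  haveI : Nonempty (X ≃ᵢ X) := ⟨1⟩
  set ν : Measure (X ≃ᵢ X) :=
    Measure.haarMeasure (⊤ : TopologicalSpace.PositiveCompacts (X ≃ᵢ X)) with hν
  haveI hνprob : IsProbabilityMeasure ν := by
    constructor
    rw [← TopologicalSpace.PositiveCompacts.coe_top (α := X ≃ᵢ X)]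
    exact Measure.haarMeasure_self
  obtain ⟨x₀⟩ : Nonempty X := inferInstance
  have heval : Measurable fun f : X ≃ᵢ X => f x₀ := (continuous_isoEval x₀).measurable
  refine ⟨ν.map (fun f : X ≃ᵢ X => f x₀), Measure.isProbabilityMeasure_map heval.aemeasurable, ?_⟩
  intro g hbij hiso
  set gE : X ≃ᵢ X := ⟨Equiv.ofBijective g hbij, hiso⟩ with hgE
  have hg : Measurable g := hiso.continuous.measurable
  have hmul : Measurable fun f : X ≃ᵢ X => gE * f := (continuous_mul_left gE).measurable
  rw [Measure.map_map hg heval]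
  have hcomp : (g ∘ fun f : X ≃ᵢ X => f x₀) = (fun f : X ≃ᵢ X => f x₀) ∘ fun f => gE * f := rfl
  rw [hcomp, ← Measure.map_map heval hmul, MeasureTheory.map_mul_left_eq_self (G := X ≃ᵢ X) ν gE]
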